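/- Let f(x) = a·log(σ(x)) + b·log(1 − σ(x)) where σ(x) = e^x/(1+e^x) and a, b > 0. Then f has a unique critical point at x = log(a/b), and this point is the global maximum of f on ℝ. -/

import Mathlib

/-- The sigmoid pairwise objective `f x = a·log σ(x) + b·log (1-σ(x))` with
`σ x = exp x / (1 + exp x)` and `a, b > 0` has a unique critical point at
`x = log (a/b)`, which is its global maximum on `ℝ`. -/
theorem sigmoid_objective_unique_critical_point_global_max
    (a b : ℝ) (ha : 0 < a) (hb : 0 < b)
    (f : ℝ → ℝ)
    (hf : f = fun x => a * Real.log (Real.exp x / (1 + Real.exp x)) +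
      b * Real.log (1 - Real.exp x / (1 + Real.exp x))) :
    deriv f (Real.log (a / b)) = 0 ∧
    (∀ x : ℝ, deriv f x = 0 → x = Real.log (a / b)) ∧
    (∀ x : ℝ, f x ≤ f (Real.log (a / b))) := by
  have hpos : ∀ x : ℝ, (0:ℝ) < 1 + Real.exp x := fun x => by positivity
  have hfx : ∀ x : ℝ, f x = a * x - (a + b) * Real.log (1 + Real.exp x) := by
    intro x
    rw [hf]
    have h1 : 1 - Real.exp x / (1 + Real.exp x) = 1 / (1 + Real.exp x) := by
      field_simp; ring
    simp only [h1]
    rw [Real.log_div (Real.exp_pos x).ne' (hpos x).ne',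
        Real.log_div one_ne_zero (hpos x).ne', Real.log_exp, Real.log_one]
    ring
  have hfeq : f = fun x : ℝ => a * x - (a + b) * Real.log (1 + Real.exp x) := funext hfx
  have hderiv : ∀ x : ℝ, HasDerivAt f (a - (a + b) * (Real.exp x / (1 + Real.exp x))) x := by
    intro x
    have h1 : HasDerivAt (fun x : ℝ => 1 + Real.exp x) (Real.exp x) x :=
      (Real.hasDerivAt_exp x).const_add 1
    have h2 : HasDerivAt (fun x : ℝ => Real.log (1 + Real.exp x))
        (Real.exp x / (1 + Real.exp x)) x := by
      have := (Real.hasDerivAt_log (hpos x).ne').comp x h1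
      exact this.congr_deriv (by ring)
    have h3 : HasDerivAt (fun x : ℝ => a * x - (a + b) * Real.log (1 + Real.exp x))
        (a - (a + b) * (Real.exp x / (1 + Real.exp x))) x := by
      exact (((hasDerivAt_id x).const_mul a).sub (h2.const_mul (a + b))).congr_deriv (by ring)
    rw [hfeq]; exact h3
  have hd : ∀ x : ℝ, deriv f x = a - (a + b) * (Real.exp x / (1 + Real.exp x)) :=
    fun x => (hderiv x).deriv
  have hab : (0:ℝ) < a / b := div_pos ha hb
  have hexp0 : Real.exp (Real.log (a / b)) = a / b := Real.exp_log hab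
  refine ⟨?_, ?_, ?_⟩
  · rw [hd, hexp0]
    field_simp
    ring
  · intro x hx
    rw [hd x] at hx
    have hex := Real.exp_pos x
    have h1 : Real.exp x = a / b := by
      field_simp at hx
      rw [eq_div_iff hb.ne']
      nlinarith [hx]
    rw [← h1, Real.log_exp]
  · intro x
    have hex := Real.exp_pos x
    set s : ℝ := Real.exp x / (1 + Real.exp x) with hsdef
    have hs0 : 0 < s := by positivity
    have hs1 : s < 1 := by
      rw [hsdef, div_lt_one (hpos x)]; linarith
    have hfx' : f x = a * Real.log s + b * Real.log (1 - s) := by rw [hf]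
    have habpos : (0:ℝ) < a + b := by linarith
    have e1 : Real.log (s * ((a+b)/a)) = Real.log s + (Real.log (a+b) - Real.log a) := by
      rw [Real.log_mul hs0.ne' (by positivity), Real.log_div habpos.ne' ha.ne']
    have e2 : Real.log ((1-s) * ((a+b)/b)) = Real.log (1-s) + (Real.log (a+b) - Real.log b) := by
      rw [Real.log_mul (by linarith) (by positivity), Real.log_div habpos.ne' hb.ne']
    have i1 : a * (Real.log s + (Real.log (a+b) - Real.log a)) ≤ (a+b)*s - a := by
      have h := Real.log_le_sub_one_of_pos (show (0:ℝ) < s*((a+b)/a) by positivity)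
      rw [e1] at h
      have h2 := mul_le_mul_of_nonneg_left h ha.le
      have h3 : a*(s*((a+b)/a) - 1) = (a+b)*s - a := by field_simp
      linarith [h2, h3.le, h3.ge]
    have i2 : b * (Real.log (1-s) + (Real.log (a+b) - Real.log b)) ≤ (a+b)*(1-s) - b := by
      have h := Real.log_le_sub_one_of_pos (mul_pos (by linarith : (0:ℝ) < 1-s) (by positivity : (0:ℝ) < (a+b)/b))
      rw [e2] at h
      have h2 := mul_le_mul_of_nonneg_left h hb.le
      have h3 : b*((1-s)*((a+b)/b) - 1) = (a+b)*(1-s) - b := by field_simp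
      linarith [h2, h3.le, h3.ge]
    have hf0 : f (Real.log (a/b)) = a * Real.log a + b * Real.log b
        - (a+b) * Real.log (a+b) := by
      rw [hfx (Real.log (a/b)), hexp0]
      have h1 : (1:ℝ) + a/b = (a+b)/b := by field_simp; ring
      rw [h1, Real.log_div habpos.ne' hb.ne', Real.log_div ha.ne' hb.ne']
      ring
    rw [hfx', hf0]
    nlinarith [i1, i2]
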